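/- Let v ≠ w be nonadjacent, unlooped twin vertices of a weighted marked graph G with v marked c and w marked u. Then [G] = [(G−w)'] + α(v)β(w)[G−v−w], where (G−w)' is obtained from G−w by unmarking v and changing its weights to α'(v) = α(v)α(w) + β(v)α(w) and β'(v) = β(v)β(w). -/

import Mathlib

/-- The six vertex marks of a multiply marked graph. -/
inductive Mark : Type
  | un | r | c | cr | u | ur
deriving DecidableEq

/-- A (multiply marked) graph: symmetric irreflexive adjacency, loops,
marks, and a number of free loops. -/
structure MGraph (V : Type) [DecidableEq V] : Type where
  adj : V → V → Bool
  adj_symm : ∀ x y, adj x y = adj y x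
  adj_irrefl : ∀ x, adj x x = false
  loop : V → Bool
  mark : V → Mark
  freeLoops : ℕ

namespace MGraph

variable {V : Type} [DecidableEq V]

/-- The mark change at `v` itself: unmarked↔u, r↔ur, c↔cr. -/
def flipV : Mark → Mark
  | .un => .u | .u => .un | .r => .ur | .ur => .r | .c => .cr | .cr => .c

/-- The mark change at neighbors of `v`: unmarked↔r, c↔ur, u↔cr. -/
def flipN : Mark → Mark
  | .un => .r | .r => .un | .c => .ur | .ur => .c | .u => .cr | .cr => .u

/-- The marked local complement `G_cru^v`. -/
def mlc (G : MGraph V) (v : V) : MGraph V where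
  adj x y := if x ≠ y ∧ G.adj v x = true ∧ G.adj v y = true then !(G.adj x y) else G.adj x y
  adj_symm := by
    intro x y
    try dsimp only
    by_cases h : x ≠ y ∧ G.adj v x = true ∧ G.adj v y = true
    · rw [if_pos h, if_pos ⟨h.1.symm, h.2.2, h.2.1⟩, G.adj_symm]
    · rw [if_neg h, if_neg (fun h' => h ⟨h'.1.symm, h'.2.2, h'.2.1⟩), G.adj_symm]
  adj_irrefl := by
    intro x
    try dsimp only
    rw [if_neg (fun h => h.1 rfl), G.adj_irrefl]
  loop := G.loop
  mark x := if x = v then flipV (G.mark x)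
            else if G.adj v x = true then flipN (G.mark x) else G.mark x
  freeLoops := G.freeLoops

end MGraph

/-- Whether a mark contains the letter `r`. -/
def Mark.hasR : Mark → Bool
  | .r => true | .cr => true | .ur => true | _ => false

/-- Whether a mark is `c` or `cr`. -/
def Mark.isC : Mark → Bool
  | .c => true | .cr => true | _ => false

/-- Whether a mark is `u` or `ur`. -/
def Mark.isU : Mark → Bool
  | .u => true | .ur => true | _ => false

/-- GF(2)-nullity of a square matrix. -/
noncomputable def nullity {n : Type} [Fintype n] (M : Matrix n n (ZMod 2)) : ℕ :=
  Fintype.card n - M.rank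

namespace MGraph

variable {V : Type} [DecidableEq V]

/-- The matrix `𝒜(G) + Δ_T` over GF(2): off-diagonal entries record adjacency,
and the diagonal entry at `x` is the loop contribution plus the `Δ_T` entry,
which is `1` iff (`x ∈ T` and the mark of `x` has no `r`) or (`x ∉ T` and it has an `r`). -/
def matT (G : MGraph V) (T : Finset V) : Matrix V V (ZMod 2) :=
  Matrix.of fun x y =>
    if x = y then
      (if G.loop x = true then 1 else 0) +
        (if ((x ∈ T) ↔ (G.mark x).hasR = false) then 1 else 0)
    else if G.adj x y = true then 1 else 0

/-- The vertices whose rows and columns are kept in `𝒜(G)_T`: delete `x` iff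
`x` is marked `c`/`cr` with diagonal entry `0`, or marked `u`/`ur` with diagonal entry `1`. -/
def keep (G : MGraph V) (T : Finset V) (x : V) : Bool :=
  !(((G.mark x).isC && decide (G.matT T x x = 0)) ||
    ((G.mark x).isU && decide (G.matT T x x = 1)))

/-- The matrix `𝒜(G)_T`, the submatrix of `𝒜(G) + Δ_T` on the kept vertices. -/
def subMat (G : MGraph V) (T : Finset V) :
    Matrix {x : V // G.keep T x = true} {x : V // G.keep T x = true} (ZMod 2) :=
  (G.matT T).submatrix Subtype.val Subtype.val

/-- The marked-graph bracket polynomial, evaluated at elements `A`, `B`, `d`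
of a commutative ring. -/
noncomputable def bracket (G : MGraph V) [Fintype V] {R : Type*} [CommRing R]
    (A B d : R) : R :=
  d ^ G.freeLoops *
    ∑ T : Finset V, A ^ (Fintype.card V - T.card) * B ^ T.card * d ^ nullity (G.subMat T)

/-- The weighted marked-graph bracket polynomial with vertex weights `α`, `β`. -/
noncomputable def wbracket (G : MGraph V) [Fintype V] {R : Type*} [CommRing R]
    (d : R) (α β : V → R) : R :=
  d ^ G.freeLoops *
    ∑ T : Finset V, (∏ x ∈ Tᶜ, α x) * (∏ x ∈ T, β x) * d ^ nullity (G.subMat T)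

/-- Deletion of the vertex `v`. -/
def delete (G : MGraph V) (v : V) : MGraph {x : V // x ≠ v} where
  adj x y := G.adj x.val y.val
  adj_symm := fun x y => G.adj_symm x.val y.val
  adj_irrefl := fun x => G.adj_irrefl x.val
  loop x := G.loop x.val
  mark x := G.mark x.val
  freeLoops := G.freeLoops

/-- Change the mark of the vertex `v` to `m`. -/
def setMark (G : MGraph V) (v : V) (m : Mark) : MGraph V :=
  { G with mark := fun x => if x = v then m else G.mark x }

/-- The one-vertex graph with given loop status and mark (and no free loops). -/
def single (l : Bool) (m : Mark) : MGraph Unit where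
  adj _ _ := false
  adj_symm := fun _ _ => rfl
  adj_irrefl := fun _ => rfl
  loop _ := l
  mark _ := m
  freeLoops := 0

end MGraph


section NullityHelpers

lemma nullity_submatrix {m n : Type} [Fintype m] [Fintype n] [DecidableEq n]
    (M : Matrix m m (ZMod 2)) (e : n ≃ m) :
    nullity (M.submatrix e e) = nullity M := by
  unfold nullity
  rw [Matrix.rank_submatrix, Fintype.card_congr e]

lemma nullity_eq_ker {n : Type} [Fintype n] (M : Matrix n n (ZMod 2)) :
    nullity M = Module.finrank (ZMod 2) (LinearMap.ker M.mulVecLin) := by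
  have h := LinearMap.finrank_range_add_finrank_ker M.mulVecLin
  have h2 : Module.finrank (ZMod 2) (n → ZMod 2) = Fintype.card n := by
    simp [Module.finrank_pi]
  unfold nullity Matrix.rank
  omega

def OMat {ι : Type} (A : Matrix ι ι (ZMod 2)) (r : ι → ZMod 2) (c : ZMod 2) :
    Matrix (Option ι) (Option ι) (ZMod 2) :=
  Matrix.of fun x y => x.elim (y.elim c r) (fun i => y.elim (r i) (fun j => A i j))

def NMat {ι : Type} (A : Matrix ι ι (ZMod 2)) (r : ι → ZMod 2) :
    Matrix (ι ⊕ Bool) (ι ⊕ Bool) (ZMod 2) :=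
  Matrix.of fun x y =>
    Sum.elim (fun i => Sum.elim (fun j => A i j) (fun _ => r i) y)
      (fun b => Sum.elim r (fun b' => if b && b' then 1 else 0) y) x

lemma nullity_NMat {ι : Type} [Fintype ι] [DecidableEq ι]
    (A : Matrix ι ι (ZMod 2)) (r : ι → ZMod 2) :
    nullity (NMat A r) = nullity (OMat A r 0) := by
  rw [nullity_eq_ker, nullity_eq_ker]
  have hpsi : ∀ x : (ι ⊕ Bool) → ZMod 2, (NMat A r).mulVecLin x = 0 →
      ((OMat A r 0).mulVecLin (fun o => o.elim (x (Sum.inr false)) (fun i => x (Sum.inl i))) = 0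
       ∧ x (Sum.inr true) = 0) := by
    intro x hx
    have hrow : ∀ s, ∑ t, NMat A r s t * x t = 0 := by
      intro s
      have := congrFun hx s
      simpa [Matrix.mulVecLin_apply, Matrix.mulVec, dotProduct] using this
    have hf := hrow (Sum.inr false)
    simp [NMat, Fintype.sum_sum_type, Fintype.sum_bool] at hf
    have ht := hrow (Sum.inr true)
    simp [NMat, Fintype.sum_sum_type, Fintype.sum_bool] at ht
    have hxt : x (Sum.inr true) = 0 := by
      rw [hf] at ht; simpa using ht
    refine ⟨?_, hxt⟩
    funext o
    show _ = (0 : Option ι → ZMod 2) o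
    simp only [Pi.zero_apply, Matrix.mulVecLin_apply, Matrix.mulVec, dotProduct]
    cases o with
    | none =>
      simp [OMat, Fintype.sum_option, hf]
    | some i =>
      have hi := hrow (Sum.inl i)
      simp [NMat, Fintype.sum_sum_type, Fintype.sum_bool, hxt] at hi
      simp [OMat, Fintype.sum_option]
      rw [add_comm]
      exact hi
  have hphi : ∀ y : Option ι → ZMod 2, (OMat A r 0).mulVecLin y = 0 →
      (NMat A r).mulVecLin (Sum.elim (fun i => y (some i)) (fun b => if b then 0 else y none)) = 0 := by
    intro y hy
    have hrow : ∀ s, ∑ t, OMat A r 0 s t * y t = 0 := by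
      intro s
      have := congrFun hy s
      simpa [Matrix.mulVecLin_apply, Matrix.mulVec, dotProduct] using this
    have hn := hrow none
    simp [OMat, Fintype.sum_option] at hn
    funext s
    show _ = (0 : (ι ⊕ Bool) → ZMod 2) s
    simp only [Pi.zero_apply, Matrix.mulVecLin_apply, Matrix.mulVec, dotProduct]
    cases s with
    | inl i =>
      have hi := hrow (some i)
      simp [OMat, Fintype.sum_option] at hi
      simp [NMat, Fintype.sum_sum_type, Fintype.sum_bool]
      rw [add_comm]
      exact hi
    | inr b =>
      cases b <;> simp [NMat, Fintype.sum_sum_type, Fintype.sum_bool, hn]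
  let e : LinearMap.ker (NMat A r).mulVecLin ≃ₗ[ZMod 2] LinearMap.ker (OMat A r 0).mulVecLin :=
  { toFun := fun x => ⟨fun o => o.elim (x.1 (Sum.inr false)) (fun i => x.1 (Sum.inl i)),
      LinearMap.mem_ker.mpr (hpsi x.1 (LinearMap.mem_ker.mp x.2)).1⟩
    map_add' := by intro a b; apply Subtype.ext; funext o; cases o <;> rfl
    map_smul' := by intro c a; apply Subtype.ext; funext o; cases o <;> rfl
    invFun := fun y => ⟨Sum.elim (fun i => y.1 (some i)) (fun b => if b then 0 else y.1 none),
      LinearMap.mem_ker.mpr (hphi y.1 (LinearMap.mem_ker.mp y.2))⟩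
    left_inv := by
      intro x; apply Subtype.ext; funext s
      rcases s with i | b
      · rfl
      · cases b
        · rfl
        · exact ((hpsi x.1 (LinearMap.mem_ker.mp x.2)).2).symm
    right_inv := by intro y; apply Subtype.ext; funext o; cases o <;> rfl }
  exact e.finrank_eq

end NullityHelpers

section GraphHelpers

variable {V : Type} [DecidableEq V]

lemma matT_diag (G : MGraph V) (T : Finset V) (x : V) :
    G.matT T x x = (if G.loop x = true then 1 else 0) +
      (if ((x ∈ T) ↔ (G.mark x).hasR = false) then 1 else 0) := by
  simp [MGraph.matT]

lemma matT_off (G : MGraph V) (T : Finset V) {x y : V} (h : x ≠ y) :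
    G.matT T x y = if G.adj x y = true then 1 else 0 := by
  simp [MGraph.matT, h]

lemma keep_def (G : MGraph V) (T : Finset V) (x : V) :
    G.keep T x = !(((G.mark x).isC && decide (G.matT T x x = 0)) ||
      ((G.mark x).isU && decide (G.matT T x x = 1))) := rfl

lemma matT_congr {V' : Type} [DecidableEq V'] (G : MGraph V) (G' : MGraph V')
    (T : Finset V) (T' : Finset V') (x y : V) (x' y' : V')
    (hm : (G.mark x).hasR = (G'.mark x').hasR) (hl : G.loop x = G'.loop x')
    (hT : x ∈ T ↔ x' ∈ T') (ha : G.adj x y = G'.adj x' y') (he : x = y ↔ x' = y') :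
    G.matT T x y = G'.matT T' x' y' := by
  simp only [MGraph.matT, Matrix.of_apply]
  by_cases h : x = y
  · have hc : ((x ∈ T) ↔ (G.mark x).hasR = false) ↔ ((x' ∈ T') ↔ (G'.mark x').hasR = false) := by
      rw [hm, hT]
    rw [if_pos h, if_pos (he.mp h), hl, if_congr hc rfl rfl]
  · rw [if_neg h, if_neg (fun hh => h (he.mpr hh)), ha]

lemma keep_congr {V' : Type} [DecidableEq V'] (G : MGraph V) (G' : MGraph V')
    (T : Finset V) (T' : Finset V') (x : V) (x' : V')
    (hm : G.mark x = G'.mark x') (hl : G.loop x = G'.loop x') (hT : x ∈ T ↔ x' ∈ T') :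
    G.keep T x = G'.keep T' x' := by
  have hd : G.matT T x x = G'.matT T' x' x' :=
    matT_congr G G' T T' x x x' x' (by rw [hm]) hl hT
      (by rw [G.adj_irrefl, G'.adj_irrefl]) (by simp)
  rw [keep_def, keep_def, hd, hm]

lemma matT_diag_val (G : MGraph V) (T : Finset V) (x : V)
    (hl : G.loop x = false) (hR : (G.mark x).hasR = false) :
    G.matT T x x = if x ∈ T then 1 else 0 := by
  rw [matT_diag, hl, hR]
  by_cases h : x ∈ T <;> simp [h]

lemma keep_c (G : MGraph V) (T : Finset V) {x : V}
    (hm : G.mark x = Mark.c) (hl : G.loop x = false) :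
    G.keep T x = decide (x ∈ T) := by
  rw [keep_def, matT_diag_val G T x hl (by rw [hm]; rfl), hm]
  by_cases h : x ∈ T <;> simp [h] <;> decide

lemma keep_u (G : MGraph V) (T : Finset V) {x : V}
    (hm : G.mark x = Mark.u) (hl : G.loop x = false) :
    G.keep T x = decide (x ∉ T) := by
  rw [keep_def, matT_diag_val G T x hl (by rw [hm]; rfl), hm]
  by_cases h : x ∈ T <;> simp [h] <;> decide

lemma keep_un (G : MGraph V) (T : Finset V) {x : V}
    (hm : G.mark x = Mark.un) :
    G.keep T x = true := by
  rw [keep_def, hm]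
  rfl

lemma keep_ne {G : MGraph V} {T : Finset V} {x y : V}
    (hy : G.keep T y = false) (hx : G.keep T x = true) : x ≠ y := by
  intro h
  rw [h, hy] at hx
  exact Bool.false_ne_true hx

end GraphHelpers


section SumProdHelpers

variable {V : Type} [DecidableEq V]

lemma subtype_of_map {p : V → Prop} [DecidablePred p] (S' : Finset {x // p x}) :
    (S'.map (Function.Embedding.subtype p)).subtype p = S' := by
  ext a
  simp only [Finset.mem_subtype, Finset.mem_map, Function.Embedding.coe_subtype, Subtype.exists,
    exists_and_right, exists_eq_right]
  exact ⟨fun ⟨_, h⟩ => h, fun h => ⟨a.2, h⟩⟩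

lemma prod_subtype_val {R : Type*} [CommMonoid R] {p : V → Prop} [DecidablePred p]
    (t : Finset V) (h : ∀ x ∈ t, p x) (g : V → R) :
    ∏ x ∈ t.subtype p, g x.1 = ∏ x ∈ t, g x := by
  conv_rhs => rw [← Finset.subtype_map_of_mem h]
  rw [Finset.prod_map]
  rfl

lemma sum_powerset_subtype {M : Type*} [AddCommMonoid M]
    {p : V → Prop} [DecidablePred p] (u : Finset V) (hu : ∀ x ∈ u, p x)
    (g : Finset {x // p x} → M) :
    ∑ S' ∈ (u.subtype p).powerset, g S' = ∑ S ∈ u.powerset, g (S.subtype p) := by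
  refine Finset.sum_nbij' (i := fun S' => S'.map (Function.Embedding.subtype p))
    (j := fun S => S.subtype p) ?_ ?_ ?_ ?_ ?_
  · intro S' hS'
    rw [Finset.mem_powerset] at hS' ⊢
    intro x hx
    rw [Finset.mem_map] at hx
    obtain ⟨b, hb, rfl⟩ := hx
    exact Finset.mem_subtype.mp (hS' hb)
  · intro S hS
    rw [Finset.mem_powerset] at hS ⊢
    intro x hx
    rw [Finset.mem_subtype] at hx ⊢
    exact hS hx
  · intro S' _
    exact subtype_of_map S'
  · intro S hS
    rw [Finset.mem_powerset] at hS
    exact Finset.subtype_map_of_mem (fun x hx => hu x (hS hx))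
  · intro S' _
    rw [subtype_of_map S']

end SumProdHelpers

section RestIdx

variable {V : Type} [DecidableEq V] [Fintype V]

/-- kept vertices other than `v`, `w`. -/
abbrev restIdx (G : MGraph V) (v w : V) (S : Finset V) : Type :=
  {x : V // x ≠ v ∧ x ≠ w ∧ G.keep S x = true}

def restA (G : MGraph V) (v w : V) (S : Finset V) :
    Matrix (restIdx G v w S) (restIdx G v w S) (ZMod 2) :=
  Matrix.of fun i j => G.matT S i.1 j.1

def restR (G : MGraph V) (v w : V) (S : Finset V) : restIdx G v w S → ZMod 2 :=
  fun i => if G.adj v i.1 = true then 1 else 0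

variable (G : MGraph V) (v w : V) (hvw : v ≠ w)
  (hadj : G.adj v w = false) (hlv : G.loop v = false) (hlw : G.loop w = false)
  (hmv : G.mark v = Mark.c) (hmw : G.mark w = Mark.u)
  (htwin : ∀ x, x ≠ v → x ≠ w → G.adj v x = G.adj w x)
  (S : Finset V) (hSv : v ∉ S) (hSw : w ∉ S)

include hvw hadj hlv hlw hmv hmw htwin hSv hSw in
lemma nullL0 : nullity (G.subMat S) = nullity (OMat (restA G v w S) (restR G v w S) 0) := by
  have kv : G.keep S v = false := by rw [keep_c G S hmv hlv]; exact decide_eq_false hSv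
  have kw : G.keep S w = true := by rw [keep_u G S hmw hlw]; exact decide_eq_true hSw
  let e : Option (restIdx G v w S) ≃ {x : V // G.keep S x = true} :=
  { toFun := fun o => o.elim ⟨w, kw⟩ (fun i => ⟨i.1, i.2.2.2⟩)
    invFun := fun x => if h : x.1 = w then none else
      some ⟨x.1, keep_ne kv x.2, h, x.2⟩
    left_inv := by
      rintro (_ | i)
      · simp
      · simp [i.2.2.1]
    right_inv := by
      intro x
      by_cases h : x.1 = w
      · simp only [h, dif_pos]
        exact Subtype.ext h.symm
      · simp [h] }
  have hM : (G.subMat S).submatrix e e = OMat (restA G v w S) (restR G v w S) 0 := by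
    ext a b
    rcases a with _ | i <;> rcases b with _ | j
    · show G.matT S w w = 0
      rw [matT_diag_val G S w hlw (by rw [hmw]; rfl), if_neg hSw]
    · show G.matT S w j.1 = restR G v w S j
      rw [matT_off G S (Ne.symm j.2.2.1),
        show G.adj w j.1 = G.adj v j.1 from (htwin j.1 j.2.1 j.2.2.1).symm]
      rfl
    · show G.matT S i.1 w = restR G v w S i
      rw [matT_off G S i.2.2.1, G.adj_symm i.1 w,
        show G.adj w i.1 = G.adj v i.1 from (htwin i.1 i.2.1 i.2.2.1).symm]
      rfl
    · rfl
  rw [← nullity_submatrix (G.subMat S) e, hM]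

set_option linter.unusedSectionVars false

include hvw hadj hlv hlw hmv hmw htwin hSv hSw in
lemma nullL3 : nullity (G.subMat (insert w S)) = nullity (restA G v w S) := by
  have kv : G.keep (insert w S) v = false := by
    rw [keep_c G _ hmv hlv]; exact decide_eq_false (by simp [hvw, hSv])
  have kw : G.keep (insert w S) w = false := by
    rw [keep_u G _ hmw hlw]; exact decide_eq_false (by simp)
  have krest : ∀ x, x ≠ v → x ≠ w → G.keep (insert w S) x = G.keep S x := by
    intro x hxv hxw
    exact keep_congr G G _ S x x rfl rfl (by simp [hxw])
  let e : restIdx G v w S ≃ {x : V // G.keep (insert w S) x = true} :=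
  { toFun := fun i => ⟨i.1, by rw [krest i.1 i.2.1 i.2.2.1]; exact i.2.2.2⟩
    invFun := fun x => ⟨x.1, keep_ne kv x.2, keep_ne kw x.2,
      by rw [← krest x.1 (keep_ne kv x.2) (keep_ne kw x.2)]; exact x.2⟩
    left_inv := fun i => rfl
    right_inv := fun x => rfl }
  have hM : (G.subMat (insert w S)).submatrix e e = restA G v w S := by
    ext i j
    show G.matT (insert w S) i.1 j.1 = G.matT S i.1 j.1
    exact matT_congr G G _ S i.1 j.1 i.1 j.1 rfl rfl (by simp [i.2.2.1]) rfl Iff.rfl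
  rw [← nullity_submatrix (G.subMat (insert w S)) e, hM]

include hvw hadj hlv hlw hmv hmw htwin hSv hSw in
lemma nullL2 : nullity (G.subMat (insert v S)) = nullity (NMat (restA G v w S) (restR G v w S)) := by
  have kv : G.keep (insert v S) v = true := by
    rw [keep_c G _ hmv hlv]; exact decide_eq_true (Finset.mem_insert_self v S)
  have kw : G.keep (insert v S) w = true := by
    rw [keep_u G _ hmw hlw]; exact decide_eq_true (by simp [Ne.symm hvw, hSw])
  have krest : ∀ x, x ≠ v → x ≠ w → G.keep (insert v S) x = G.keep S x := by
    intro x hxv hxw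
    exact keep_congr G G _ S x x rfl rfl (by simp [hxv])
  let e : restIdx G v w S ⊕ Bool ≃ {x : V // G.keep (insert v S) x = true} :=
  { toFun := Sum.elim (fun i => ⟨i.1, by rw [krest i.1 i.2.1 i.2.2.1]; exact i.2.2.2⟩)
      (fun b => if b then ⟨v, kv⟩ else ⟨w, kw⟩)
    invFun := fun x => if h1 : x.1 = v then Sum.inr true else if h2 : x.1 = w then Sum.inr false
      else Sum.inl ⟨x.1, h1, h2, by rw [← krest x.1 h1 h2]; exact x.2⟩
    left_inv := by
      rintro (i | b)
      · simp [i.2.1, i.2.2.1]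
      · cases b
        · exact (dif_neg (Ne.symm hvw)).trans (dif_pos rfl)
        · exact dif_pos rfl
    right_inv := by
      intro x
      by_cases h1 : x.1 = v
      · simp only [h1, dif_pos]
        exact Subtype.ext h1.symm
      · by_cases h2 : x.1 = w
        · simp only [dif_neg h1, dif_pos h2]
          exact Subtype.ext h2.symm
        · simp [h1, h2] }
  have hM : (G.subMat (insert v S)).submatrix e e = NMat (restA G v w S) (restR G v w S) := by
    ext a b
    rcases a with i | s1 <;> rcases b with j | s2
    · show G.matT (insert v S) i.1 j.1 = G.matT S i.1 j.1
      exact matT_congr G G _ S i.1 j.1 i.1 j.1 rfl rfl (by simp [i.2.1]) rfl Iff.rfl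
    · cases s2
      · show G.matT (insert v S) i.1 w = restR G v w S i
        rw [matT_off G _ i.2.2.1, G.adj_symm i.1 w,
          show G.adj w i.1 = G.adj v i.1 from (htwin i.1 i.2.1 i.2.2.1).symm]
        rfl
      · show G.matT (insert v S) i.1 v = restR G v w S i
        rw [matT_off G _ i.2.1, G.adj_symm i.1 v]
        rfl
    · cases s1
      · show G.matT (insert v S) w j.1 = restR G v w S j
        rw [matT_off G _ (Ne.symm j.2.2.1),
          show G.adj w j.1 = G.adj v j.1 from (htwin j.1 j.2.1 j.2.2.1).symm]
        rfl
      · show G.matT (insert v S) v j.1 = restR G v w S j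
        rw [matT_off G _ (Ne.symm j.2.1)]
        rfl
    · cases s1 <;> cases s2
      · show G.matT (insert v S) w w = 0
        rw [matT_diag_val G _ w hlw (by rw [hmw]; rfl), if_neg (by simp [Ne.symm hvw, hSw])]
      · show G.matT (insert v S) w v = 0
        rw [matT_off G _ (Ne.symm hvw), G.adj_symm w v, hadj]
        rfl
      · show G.matT (insert v S) v w = 0
        rw [matT_off G _ hvw, hadj]
        rfl
      · show G.matT (insert v S) v v = 1
        rw [matT_diag_val G _ v hlv (by rw [hmv]; rfl), if_pos (Finset.mem_insert_self v S)]
  rw [← nullity_submatrix (G.subMat (insert v S)) e, hM]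

include hvw hadj hlv hlw hmv hmw htwin hSv hSw in
lemma nullL4 : nullity (G.subMat (insert v (insert w S)))
    = nullity (OMat (restA G v w S) (restR G v w S) 1) := by
  have kv : G.keep (insert v (insert w S)) v = true := by
    rw [keep_c G _ hmv hlv]; exact decide_eq_true (Finset.mem_insert_self _ _)
  have kw : G.keep (insert v (insert w S)) w = false := by
    rw [keep_u G _ hmw hlw]; exact decide_eq_false (by simp)
  have krest : ∀ x, x ≠ v → x ≠ w → G.keep (insert v (insert w S)) x = G.keep S x := by
    intro x hxv hxw
    exact keep_congr G G _ S x x rfl rfl (by simp [hxv, hxw])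
  let e : Option (restIdx G v w S) ≃ {x : V // G.keep (insert v (insert w S)) x = true} :=
  { toFun := fun o => o.elim ⟨v, kv⟩ (fun i => ⟨i.1, by rw [krest i.1 i.2.1 i.2.2.1]; exact i.2.2.2⟩)
    invFun := fun x => if h : x.1 = v then none else
      some ⟨x.1, h, keep_ne kw x.2, by rw [← krest x.1 h (keep_ne kw x.2)]; exact x.2⟩
    left_inv := by
      rintro (_ | i)
      · simp
      · simp [i.2.1]
    right_inv := by
      intro x
      by_cases h : x.1 = v
      · simp only [h, dif_pos]
        exact Subtype.ext h.symm
      · simp [h] }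
  have hM : (G.subMat (insert v (insert w S))).submatrix e e
      = OMat (restA G v w S) (restR G v w S) 1 := by
    ext a b
    rcases a with _ | i <;> rcases b with _ | j
    · show G.matT (insert v (insert w S)) v v = 1
      rw [matT_diag_val G _ v hlv (by rw [hmv]; rfl), if_pos (Finset.mem_insert_self _ _)]
    · show G.matT (insert v (insert w S)) v j.1 = restR G v w S j
      rw [matT_off G _ (Ne.symm j.2.1)]
      rfl
    · show G.matT (insert v (insert w S)) i.1 v = restR G v w S i
      rw [matT_off G _ i.2.1, G.adj_symm i.1 v]
      rfl
    · show G.matT (insert v (insert w S)) i.1 j.1 = G.matT S i.1 j.1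
      exact matT_congr G G _ S i.1 j.1 i.1 j.1 rfl rfl (by simp [i.2.1, i.2.2.1]) rfl Iff.rfl
  rw [← nullity_submatrix (G.subMat (insert v (insert w S))) e, hM]

include hvw hadj hlv hlw hmv hmw htwin hSv hSw in
lemma nullL0' :
    nullity ((((G.delete w).setMark ⟨v, hvw⟩ Mark.un)).subMat (S.subtype (· ≠ w)))
      = nullity (OMat (restA G v w S) (restR G v w S) 0) := by
  set G' := (G.delete w).setMark ⟨v, hvw⟩ Mark.un with hG'
  set S' := S.subtype (· ≠ w) with hS'
  have hm'v : G'.mark ⟨v, hvw⟩ = Mark.un := by simp [hG', MGraph.setMark]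
  have hm'o : ∀ x' : {x : V // x ≠ w}, x'.1 ≠ v → G'.mark x' = G.mark x'.1 := by
    intro x' hx
    show (if x' = ⟨v, hvw⟩ then Mark.un else G.mark x'.1) = G.mark x'.1
    rw [if_neg (fun h => hx (congrArg Subtype.val h))]
  have kv' : G'.keep S' ⟨v, hvw⟩ = true := keep_un G' S' hm'v
  have krest : ∀ x' : {x : V // x ≠ w}, x'.1 ≠ v → G'.keep S' x' = G.keep S x'.1 := by
    intro x' hx
    exact keep_congr G' G S' S x' x'.1 (hm'o x' hx) rfl (Finset.mem_subtype)
  let e : Option (restIdx G v w S) ≃ {x' : {x : V // x ≠ w} // G'.keep S' x' = true} :=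
  { toFun := fun o => o.elim ⟨⟨v, hvw⟩, kv'⟩
      (fun i => ⟨⟨i.1, i.2.2.1⟩, by rw [krest ⟨i.1, i.2.2.1⟩ i.2.1]; exact i.2.2.2⟩)
    invFun := fun x' => if h : x'.1.1 = v then none else
      some ⟨x'.1.1, h, x'.1.2, by rw [← krest x'.1 h]; exact x'.2⟩
    left_inv := by
      rintro (_ | i)
      · simp
      · exact dif_neg i.2.1
    right_inv := by
      intro x'
      by_cases h : x'.1.1 = v
      · simp only [dif_pos h]
        exact Subtype.ext (Subtype.ext h.symm)
      · simp only [dif_neg h]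
        rfl }
  have hM : (G'.subMat S').submatrix e e = OMat (restA G v w S) (restR G v w S) 0 := by
    ext a b
    rcases a with _ | i <;> rcases b with _ | j
    · show G'.matT S' ⟨v, hvw⟩ ⟨v, hvw⟩ = 0
      rw [matT_diag_val G' S' ⟨v, hvw⟩ hlv (by rw [hm'v]; rfl),
        if_neg (fun hh => hSv (Finset.mem_subtype.mp hh))]
    · show G'.matT S' ⟨v, hvw⟩ ⟨j.1, j.2.2.1⟩ = restR G v w S j
      rw [matT_off G' S' (fun hh => j.2.1 (congrArg Subtype.val hh).symm)]
      rfl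
    · show G'.matT S' ⟨i.1, i.2.2.1⟩ ⟨v, hvw⟩ = restR G v w S i
      rw [matT_off G' S' (fun hh => i.2.1 (congrArg Subtype.val hh))]
      rw [show G'.adj ⟨i.1, i.2.2.1⟩ ⟨v, hvw⟩ = G.adj v i.1 from (G.adj_symm i.1 v : _)]
      rfl
    · show G'.matT S' ⟨i.1, i.2.2.1⟩ ⟨j.1, j.2.2.1⟩ = G.matT S i.1 j.1
      exact matT_congr G' G S' S _ _ i.1 j.1 (by rw [hm'o _ i.2.1]) rfl
        Finset.mem_subtype rfl Subtype.ext_iff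
  rw [← nullity_submatrix (G'.subMat S') e, hM]

include hvw hadj hlv hlw hmv hmw htwin hSv hSw in
lemma nullL4' :
    nullity ((((G.delete w).setMark ⟨v, hvw⟩ Mark.un)).subMat
        (insert ⟨v, hvw⟩ (S.subtype (· ≠ w))))
      = nullity (OMat (restA G v w S) (restR G v w S) 1) := by
  set G' := (G.delete w).setMark ⟨v, hvw⟩ Mark.un with hG'
  set T' := insert (⟨v, hvw⟩ : {x : V // x ≠ w}) (S.subtype (· ≠ w)) with hT'
  have hm'v : G'.mark ⟨v, hvw⟩ = Mark.un := by simp [hG', MGraph.setMark]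
  have hm'o : ∀ x' : {x : V // x ≠ w}, x'.1 ≠ v → G'.mark x' = G.mark x'.1 := by
    intro x' hx
    show (if x' = ⟨v, hvw⟩ then Mark.un else G.mark x'.1) = G.mark x'.1
    rw [if_neg (fun h => hx (congrArg Subtype.val h))]
  have kv' : G'.keep T' ⟨v, hvw⟩ = true := keep_un G' T' hm'v
  have hmemT' : ∀ x' : {x : V // x ≠ w}, x'.1 ≠ v → (x' ∈ T' ↔ x'.1 ∈ S) := by
    intro x' hx
    rw [hT', Finset.mem_insert, Finset.mem_subtype]
    exact or_iff_right (fun h => hx (congrArg Subtype.val h))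
  have krest : ∀ x' : {x : V // x ≠ w}, x'.1 ≠ v → G'.keep T' x' = G.keep S x'.1 := by
    intro x' hx
    exact keep_congr G' G T' S x' x'.1 (hm'o x' hx) rfl (hmemT' x' hx)
  let e : Option (restIdx G v w S) ≃ {x' : {x : V // x ≠ w} // G'.keep T' x' = true} :=
  { toFun := fun o => o.elim ⟨⟨v, hvw⟩, kv'⟩
      (fun i => ⟨⟨i.1, i.2.2.1⟩, by rw [krest ⟨i.1, i.2.2.1⟩ i.2.1]; exact i.2.2.2⟩)
    invFun := fun x' => if h : x'.1.1 = v then none else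
      some ⟨x'.1.1, h, x'.1.2, by rw [← krest x'.1 h]; exact x'.2⟩
    left_inv := by
      rintro (_ | i)
      · simp
      · exact dif_neg i.2.1
    right_inv := by
      intro x'
      by_cases h : x'.1.1 = v
      · simp only [dif_pos h]
        exact Subtype.ext (Subtype.ext h.symm)
      · simp only [dif_neg h]
        rfl }
  have hM : (G'.subMat T').submatrix e e = OMat (restA G v w S) (restR G v w S) 1 := by
    ext a b
    rcases a with _ | i <;> rcases b with _ | j
    · show G'.matT T' ⟨v, hvw⟩ ⟨v, hvw⟩ = 1
      rw [matT_diag_val G' T' ⟨v, hvw⟩ hlv (by rw [hm'v]; rfl),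
        if_pos (Finset.mem_insert_self _ _)]
    · show G'.matT T' ⟨v, hvw⟩ ⟨j.1, j.2.2.1⟩ = restR G v w S j
      rw [matT_off G' T' (fun hh => j.2.1 (congrArg Subtype.val hh).symm)]
      rfl
    · show G'.matT T' ⟨i.1, i.2.2.1⟩ ⟨v, hvw⟩ = restR G v w S i
      rw [matT_off G' T' (fun hh => i.2.1 (congrArg Subtype.val hh))]
      rw [show G'.adj ⟨i.1, i.2.2.1⟩ ⟨v, hvw⟩ = G.adj v i.1 from (G.adj_symm i.1 v : _)]
      rfl
    · show G'.matT T' ⟨i.1, i.2.2.1⟩ ⟨j.1, j.2.2.1⟩ = G.matT S i.1 j.1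
      exact matT_congr G' G T' S _ _ i.1 j.1 (by rw [hm'o _ i.2.1]) rfl
        (hmemT' _ i.2.1) rfl Subtype.ext_iff
  rw [← nullity_submatrix (G'.subMat T') e, hM]

set_option maxHeartbeats 1600000 in
include hvw hadj hlv hlw hmv hmw htwin hSv hSw in
lemma nullL3'' :
    nullity (((G.delete w).delete ⟨v, hvw⟩).subMat
        ((S.subtype (· ≠ w)).subtype (· ≠ ⟨v, hvw⟩)))
      = nullity (restA G v w S) := by
  set G'' := (G.delete w).delete ⟨v, hvw⟩ with hG''
  set S'' := (S.subtype (· ≠ w)).subtype (· ≠ ⟨v, hvw⟩) with hS''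
  have krest : ∀ x'', G''.keep S'' x'' = G.keep S x''.1.1 := by
    intro x''
    refine keep_congr G'' G S'' S x'' x''.1.1 rfl rfl ?_
    rw [hS'', Finset.mem_subtype, Finset.mem_subtype]
  let e : restIdx G v w S ≃ {x'' // G''.keep S'' x'' = true} :=
  { toFun := fun i => ⟨⟨⟨i.1, i.2.2.1⟩, fun hh => i.2.1 (congrArg Subtype.val hh)⟩,
      by rw [krest]; exact i.2.2.2⟩
    invFun := fun x => ⟨x.1.1.1, fun h => x.1.2 (Subtype.ext h), x.1.1.2,
      by rw [← krest x.1]; exact x.2⟩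
    left_inv := fun i => rfl
    right_inv := fun x => rfl }
  have hM : (G''.subMat S'').submatrix e e = restA G v w S := by
    ext i j
    refine matT_congr G'' G S'' S ((e i).1) ((e j).1) i.1 j.1 rfl rfl ?_ rfl ?_
    · simp only [hS'', Finset.mem_subtype]
      exact Iff.rfl
    · exact Iff.trans Subtype.ext_iff Subtype.ext_iff
  rw [← nullity_submatrix (G''.subMat S'') e, hM]

end RestIdx

/-- let `v ≠ w` be nonadjacent, unlooped twin vertices of a
weighted marked graph `G`, with `v` marked `c` and `w` marked `u`.
Then `[G] = [(G−w)'] + α(v)β(w)[G−v−w]`, where `(G−w)'` is `G−w` with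
`v` unmarked and its weights changed to `α'(v) = α(v)α(w) + β(v)α(w)` and
`β'(v) = β(v)β(w)`. -/
theorem wbracket_twin_cu {V : Type} [DecidableEq V] [Fintype V]
    (G : MGraph V) (v w : V) (hvw : v ≠ w)
    (hadj : G.adj v w = false)
    (hlv : G.loop v = false) (hlw : G.loop w = false)
    (hmv : G.mark v = Mark.c) (hmw : G.mark w = Mark.u)
    (htwin : ∀ x, x ≠ v → x ≠ w → G.adj v x = G.adj w x)
    {R : Type*} [CommRing R] (d : R) (α β : V → R) :
    G.wbracket d α β =
      ((G.delete w).setMark ⟨v, hvw⟩ Mark.un).wbracket d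
        (fun x => if x.val = v then α v * α w + β v * α w else α x.val)
        (fun x => if x.val = v then β v * β w else β x.val) +
      α v * β w *
        ((G.delete w).delete ⟨v, hvw⟩).wbracket d
          (fun x => α x.val.val) (fun x => β x.val.val) := by
  classical
  simp only [MGraph.wbracket]
  have hfl1 : ((G.delete w).setMark ⟨v, hvw⟩ Mark.un).freeLoops = G.freeLoops := rfl
  have hfl2 : ((G.delete w).delete ⟨v, hvw⟩).freeLoops = G.freeLoops := rfl
  rw [hfl1, hfl2, ← mul_assoc (α v * β w), mul_comm (α v * β w) (d ^ G.freeLoops),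
    mul_assoc, ← mul_add]
  congr 1
  set u : Finset V := Finset.univ \ {v, w} with hu
  have huw : ∀ x ∈ u, x ≠ w := by intro x hx; rw [hu] at hx; simp at hx; tauto
  have huv : ∀ x ∈ u, x ≠ v := by intro x hx; rw [hu] at hx; simp at hx; tauto
  have hwu : w ∉ u := fun h => huw w h rfl
  have hvu : v ∉ insert w u := by
    simp only [Finset.mem_insert]
    rintro (h | h)
    · exact hvw h
    · exact huv v h rfl
  have huniv : insert v (insert w u) = (Finset.univ : Finset V) := by
    ext x
    by_cases h1 : x = v <;> by_cases h2 : x = w <;> simp [hu, h1, h2]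
  have hv'u : (⟨v, hvw⟩ : {x : V // x ≠ w}) ∉ u.subtype (· ≠ w) := by
    rw [Finset.mem_subtype]
    exact fun h => huv v h rfl
  have huniv' : insert ⟨v, hvw⟩ (u.subtype (· ≠ w)) = (Finset.univ : Finset {x : V // x ≠ w}) := by
    ext x'
    simp only [Finset.mem_insert, Finset.mem_univ, iff_true, Finset.mem_subtype]
    by_cases h : x' = ⟨v, hvw⟩
    · exact Or.inl h
    · refine Or.inr ?_
      rw [hu]
      simp only [Finset.mem_sdiff, Finset.mem_univ, true_and, Finset.mem_insert,
        Finset.mem_singleton]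
      push_neg
      exact ⟨fun hh => h (Subtype.ext hh), x'.2⟩
  have huniv'' : (u.subtype (· ≠ w)).subtype (· ≠ ⟨v, hvw⟩)
      = (Finset.univ : Finset {x' : {x : V // x ≠ w} // x' ≠ ⟨v, hvw⟩}) := by
    ext x''
    simp only [Finset.mem_subtype, Finset.mem_univ, iff_true, hu, Finset.mem_sdiff,
      Finset.mem_insert, Finset.mem_singleton, true_and]
    push_neg
    exact ⟨fun hh => x''.2 (Subtype.ext hh), x''.1.2⟩
  -- rewrite all three sums as sums over powersets
  rw [← Finset.powerset_univ, ← huniv, Finset.sum_powerset_insert hvu]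
  simp only [Finset.sum_powerset_insert hwu]
  conv_rhs =>
    rw [← Finset.powerset_univ, ← huniv', Finset.sum_powerset_insert hv'u,
      ← Finset.powerset_univ, ← huniv'']
  rw [sum_powerset_subtype u huw, sum_powerset_subtype u huw,
    sum_powerset_subtype (p := (· ≠ (⟨v, hvw⟩ : {x : V // x ≠ w}))) (u.subtype (· ≠ w))
      (fun x' hx' h => hv'u (h ▸ hx')),
    sum_powerset_subtype u huw]
  simp only [Finset.mul_sum u.powerset _ (α v * β w)]
  simp only [← Finset.sum_add_distrib]
  refine Finset.sum_congr rfl fun S hS => ?_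
  have hSu : S ⊆ u := Finset.mem_powerset.mp hS
  have hSv : v ∉ S := fun h => huv v (hSu h) rfl
  have hSw : w ∉ S := fun h => huw w (hSu h) rfl
  have hSwall : ∀ x ∈ S, x ≠ w := fun x hx => huw x (hSu hx)
  -- nullity rewrites
  rw [nullL0 G v w hvw hadj hlv hlw hmv hmw htwin S hSv hSw,
    nullL3 G v w hvw hadj hlv hlw hmv hmw htwin S hSv hSw,
    nullL2 G v w hvw hadj hlv hlw hmv hmw htwin S hSv hSw,
    nullL4 G v w hvw hadj hlv hlw hmv hmw htwin S hSv hSw,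
    nullity_NMat,
    nullL0' G v w hvw hadj hlv hlw hmv hmw htwin S hSv hSw,
    nullL4' G v w hvw hadj hlv hlw hmv hmw htwin S hSv hSw,
    nullL3'' G v w hvw hadj hlv hlw hmv hmw htwin S hSv hSw]
  -- coefficient rewrites
  have hvS : v ∈ Sᶜ := Finset.mem_compl.mpr hSv
  have hwSv : w ∈ Sᶜ.erase v := Finset.mem_erase.mpr ⟨Ne.symm hvw, Finset.mem_compl.mpr hSw⟩
  have hvSw : v ∈ Sᶜ.erase w := Finset.mem_erase.mpr ⟨hvw, hvS⟩
  have hc1 : ∏ x ∈ Sᶜ, α x = α v * (α w * ∏ x ∈ (Sᶜ.erase v).erase w, α x) := by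
    rw [← Finset.mul_prod_erase Sᶜ α hvS, ← Finset.mul_prod_erase (Sᶜ.erase v) α hwSv]
  have hc2 : ∏ x ∈ (insert w S)ᶜ, α x = α v * ∏ x ∈ (Sᶜ.erase v).erase w, α x := by
    rw [Finset.compl_insert, ← Finset.mul_prod_erase (Sᶜ.erase w) α hvSw,
      Finset.erase_right_comm]
  have hc3 : ∏ x ∈ (insert v S)ᶜ, α x = α w * ∏ x ∈ (Sᶜ.erase v).erase w, α x := by
    rw [Finset.compl_insert, ← Finset.mul_prod_erase (Sᶜ.erase v) α hwSv]
  have hc4 : ∏ x ∈ (insert v (insert w S))ᶜ, α x = ∏ x ∈ (Sᶜ.erase v).erase w, α x := by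
    rw [Finset.compl_insert, Finset.compl_insert, Finset.erase_right_comm]
  have hb2 : ∏ x ∈ insert w S, β x = β w * ∏ x ∈ S, β x := Finset.prod_insert hSw
  have hb3 : ∏ x ∈ insert v S, β x = β v * ∏ x ∈ S, β x := Finset.prod_insert hSv
  have hvwS : v ∉ insert w S := by simp [hvw, hSv]
  have hb4 : ∏ x ∈ insert v (insert w S), β x = β v * (β w * ∏ x ∈ S, β x) := by
    rw [Finset.prod_insert hvwS, hb2]
  -- G' side products
  have hv'sub : (⟨v, hvw⟩ : {x : V // x ≠ w}) ∉ ((Sᶜ.erase v).erase w).subtype (· ≠ w) := by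
    rw [Finset.mem_subtype]
    simp
  have hS'c : (S.subtype (· ≠ w))ᶜ = insert ⟨v, hvw⟩ (((Sᶜ.erase v).erase w).subtype (· ≠ w)) := by
    ext x'
    simp only [Finset.mem_compl, Finset.mem_subtype, Finset.mem_insert, Finset.mem_erase]
    constructor
    · intro hx
      by_cases h : x'.1 = v
      · exact Or.inl (Subtype.ext h)
      · exact Or.inr ⟨x'.2, h, hx⟩
    · rintro (h | ⟨_, _, h⟩)
      · rw [h]
        exact hSv
      · exact h
  have halpha : ∀ x ∈ ((Sᶜ.erase v).erase w).subtype (· ≠ w),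
      (if x.1 = v then α v * α w + β v * α w else α x.1) = α x.1 := by
    intro x hx
    rw [Finset.mem_subtype, Finset.mem_erase] at hx
    exact if_neg (Finset.mem_erase.mp hx.2).1
  have hsubval : ∏ x ∈ ((Sᶜ.erase v).erase w).subtype (· ≠ w), α x.1
      = ∏ x ∈ (Sᶜ.erase v).erase w, α x :=
    prod_subtype_val _ (fun x hx => (Finset.mem_erase.mp hx).1) α
  have hca : (∏ x ∈ (S.subtype (· ≠ w))ᶜ, if x.1 = v then α v * α w + β v * α w else α x.1)
      = (α v * α w + β v * α w) * ∏ x ∈ (Sᶜ.erase v).erase w, α x := by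
    rw [hS'c, Finset.prod_insert hv'sub, if_pos rfl, Finset.prod_congr rfl halpha, hsubval]
  have hcb : (∏ x ∈ S.subtype (· ≠ w), if x.1 = v then β v * β w else β x.1)
      = ∏ x ∈ S, β x := by
    have hbe : ∀ x ∈ S.subtype (· ≠ w), (if x.1 = v then β v * β w else β x.1) = β x.1 := by
      intro x hx
      refine if_neg (fun h => hSv ?_)
      have hm := Finset.mem_subtype.mp hx
      rw [h] at hm
      exact hm
    rw [Finset.prod_congr rfl hbe, prod_subtype_val S hSwall β]
  have hv'S' : (⟨v, hvw⟩ : {x : V // x ≠ w}) ∉ S.subtype (· ≠ w) :=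
    fun h => hSv (Finset.mem_subtype.mp h)
  have hcc : (∏ x ∈ (insert ⟨v, hvw⟩ (S.subtype (· ≠ w)))ᶜ,
        if x.1 = v then α v * α w + β v * α w else α x.1)
      = ∏ x ∈ (Sᶜ.erase v).erase w, α x := by
    rw [Finset.compl_insert, hS'c, Finset.erase_insert hv'sub,
      Finset.prod_congr rfl halpha, hsubval]
  have hcd : (∏ x ∈ insert ⟨v, hvw⟩ (S.subtype (· ≠ w)), if x.1 = v then β v * β w else β x.1)
      = β v * β w * ∏ x ∈ S, β x := by
    rw [Finset.prod_insert hv'S', if_pos rfl, hcb, mul_assoc]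
  -- G'' side products
  have hq1 : ∀ x' ∈ ((Sᶜ.erase v).erase w).subtype (· ≠ w),
      x' ≠ (⟨v, hvw⟩ : {x : V // x ≠ w}) := by
    intro x' hx' h
    rw [Finset.mem_subtype, Finset.mem_erase] at hx'
    exact (Finset.mem_erase.mp hx'.2).1 (congrArg Subtype.val h)
  have hS''c : ((S.subtype (· ≠ w)).subtype (· ≠ ⟨v, hvw⟩))ᶜ
      = (((Sᶜ.erase v).erase w).subtype (· ≠ w)).subtype (· ≠ ⟨v, hvw⟩) := by
    ext x''
    simp only [Finset.mem_compl, Finset.mem_subtype, Finset.mem_erase]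
    constructor
    · intro hx
      exact ⟨x''.1.2, fun h => x''.2 (Subtype.ext h), hx⟩
    · rintro ⟨_, _, h⟩
      exact h
  have hce : (∏ x ∈ ((S.subtype (· ≠ w)).subtype (· ≠ ⟨v, hvw⟩))ᶜ, α x.1.1)
      = ∏ x ∈ (Sᶜ.erase v).erase w, α x := by
    rw [hS''c, prod_subtype_val _ hq1 (fun x' => α x'.1), hsubval]
  have hq2 : ∀ x' ∈ S.subtype (· ≠ w), x' ≠ (⟨v, hvw⟩ : {x : V // x ≠ w}) := by
    intro x' hx' h
    have hm := Finset.mem_subtype.mp hx'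
    rw [congrArg Subtype.val h] at hm
    exact hSv hm
  have hcf : (∏ x ∈ (S.subtype (· ≠ w)).subtype (· ≠ ⟨v, hvw⟩), β x.1.1)
      = ∏ x ∈ S, β x := by
    rw [prod_subtype_val _ hq2 (fun x' => β x'.1), prod_subtype_val S hSwall β]
  rw [hc1, hc2, hc3, hc4, hb2, hb3, hb4, hca, hcb, hcc, hcd, hce, hcf]
  ring
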